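/- If G is a connected directed graph that is not a rose and c(G) > 3, then there exists a proper connected subgraph K of G such that K is not a rose and c(K) = 3. -/

import Mathlib

open scoped Classical

namespace Money

/-- A finite simple directed graph without loops, on a subset of `Fin n`. -/
structure Digraph (n : ℕ) where
  verts : Finset (Fin n)
  edges : Finset (Fin n × Fin n)
  mem_verts : ∀ e ∈ edges, e.1 ∈ verts ∧ e.2 ∈ verts
  no_loops : ∀ e ∈ edges, e.1 ≠ e.2

namespace Digraph

variable {n : ℕ}

/-- There is a directed path (possibly empty) from `i` to `j`. -/
def Reaches (G : Digraph n) : Fin n → Fin n → Prop :=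
  Relation.ReflTransGen fun a b => (a, b) ∈ G.edges

/-- `G` is connected: nonempty, and any vertex reaches any other by a directed path. -/
def Connected (G : Digraph n) : Prop :=
  G.verts.Nonempty ∧ ∀ i ∈ G.verts, ∀ j ∈ G.verts, G.Reaches i j

/-- `T` is (the edge set of) a spanning `i`-tree of `G`: every vertex `j ≠ i`
has a unique directed path in `T` to `i`. -/
def IsSpanTree (G : Digraph n) (i : Fin n) (T : Finset (Fin n × Fin n)) : Prop :=
  T ⊆ G.edges ∧
  (∀ j ∈ G.verts, j ≠ i → ∃! k, (j, k) ∈ T) ∧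
  (∀ k, (i, k) ∉ T) ∧
  ∀ j ∈ G.verts, Relation.ReflTransGen (fun a b => (a, b) ∈ T) j i

/-- The spanning-tree price of vertex `i` at edge weights `b`. -/
noncomputable def price (G : Digraph n) (i : Fin n) (b : Fin n × Fin n → ℝ) : ℝ :=
  ∑ T ∈ G.edges.powerset.filter (fun T => G.IsSpanTree i T), ∏ e ∈ T, b e

/-- The price-ratio function `b ↦ p_i(b)/p_j(b)`. -/
noncomputable def priceRatio (G : Digraph n) (i j : Fin n) (b : Fin n × Fin n → ℝ) : ℝ :=
  G.price i b / G.price j b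

/-- An edge coordinate `e` is influential for `f` (as a function on positive
weight vectors on the edges of `G`). -/
def Influential (G : Digraph n) (f : (Fin n × Fin n → ℝ) → ℝ) (e : Fin n × Fin n) : Prop :=
  ∃ b b' : Fin n × Fin n → ℝ,
    (∀ e' ∈ G.edges, 0 < b e') ∧ (∀ e' ∈ G.edges, 0 < b' e') ∧
    (∀ e', e' ≠ e → b e' = b' e') ∧ f b ≠ f b'

/-- `π_ij(G)`: the number of influential edges of the price-ratio `p_i/p_j`. -/
noncomputable def priceCplxPair (G : Digraph n) (i j : Fin n) : ℕ :=
  (G.edges.filter (fun e => G.Influential (G.priceRatio i j) e)).card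

/-- The price complexity `π(G) = max_{i ≠ j} π_ij(G)`. -/
noncomputable def priceComplexity (G : Digraph n) : ℕ :=
  ((G.verts ×ˢ G.verts).filter fun p => p.1 ≠ p.2).sup fun p => G.priceCplxPair p.1 p.2

/-- There is a directed walk of length `k` from `i` to `j`. -/
def HasWalk (G : Digraph n) (i j : Fin n) (k : ℕ) : Prop :=
  ∃ g : ℕ → Fin n, g 0 = i ∧ g k = j ∧ ∀ t < k, (g t, g (t + 1)) ∈ G.edges

/-- Length of a shortest directed path from `i` to `j`. -/
noncomputable def dist (G : Digraph n) (i j : Fin n) : ℕ := sInf {k | G.HasWalk i j k}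

/-- The time complexity `τ(G)`: the diameter of `G`. -/
noncomputable def timeComplexity (G : Digraph n) : ℕ :=
  ((G.verts ×ˢ G.verts).filter fun p => p.1 ≠ p.2).sup fun p => G.dist p.1 p.2

def outdeg (G : Digraph n) (v : Fin n) : ℕ := (G.edges.filter fun e => e.1 = v).card

def indeg (G : Digraph n) (v : Fin n) : ℕ := (G.edges.filter fun e => e.2 = v).card

/-- A directed cycle: connected, and every vertex has exactly one outgoing
and one incoming edge. -/
def IsCycleGraph (G : Digraph n) : Prop :=
  G.Connected ∧ ∀ v ∈ G.verts, G.outdeg v = 1 ∧ G.indeg v = 1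

/-- `P` is a (simple) directed path from `s` to `t`, `s ≠ t`. -/
def IsPathGraph (P : Digraph n) (s t : Fin n) : Prop :=
  s ≠ t ∧ s ∈ P.verts ∧ t ∈ P.verts ∧
  (∀ v ∈ P.verts, P.Reaches s v ∧ P.Reaches v t) ∧
  (∀ v ∈ P.verts, v ≠ t → P.outdeg v = 1) ∧ P.outdeg t = 0 ∧
  (∀ v ∈ P.verts, v ≠ s → P.indeg v = 1) ∧ P.indeg s = 0

/-- Union of two digraphs. -/
def union (G H : Digraph n) : Digraph n where
  verts := G.verts ∪ H.verts
  edges := G.edges ∪ H.edges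
  mem_verts := by
    intro e he
    rcases Finset.mem_union.mp he with h | h
    · exact ⟨Finset.mem_union_left _ (G.mem_verts e h).1,
        Finset.mem_union_left _ (G.mem_verts e h).2⟩
    · exact ⟨Finset.mem_union_right _ (H.mem_verts e h).1,
        Finset.mem_union_right _ (H.mem_verts e h).2⟩
  no_loops := by
    intro e he
    rcases Finset.mem_union.mp he with h | h
    · exact G.no_loops e h
    · exact H.no_loops e h

/-- A chorded cycle: a directed cycle `C` together with a directed path `P`
joining two distinct vertices of `C`, otherwise disjoint from `C`. -/
def IsChordedCycle (G : Digraph n) : Prop :=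
  ∃ (C P : Digraph n) (s t : Fin n),
    C.IsCycleGraph ∧ P.IsPathGraph s t ∧ s ∈ C.verts ∧ t ∈ C.verts ∧
    P.verts ∩ C.verts = {s, t} ∧ Disjoint C.edges P.edges ∧ G = C.union P

/-- A `k`-rose: `k` directed cycles sharing a single common vertex, otherwise
pairwise disjoint.  A `0`-rose is a single vertex. -/
def IsRose (G : Digraph n) (k : ℕ) : Prop :=
  ∃ (j : Fin n) (C : Fin k → Digraph n),
    (∀ i, (C i).IsCycleGraph) ∧ (∀ i, j ∈ (C i).verts) ∧
    (∀ i i', i ≠ i' → (C i).verts ∩ (C i').verts = {j}) ∧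
    G.verts = insert j (Finset.univ.biUnion fun i => (C i).verts) ∧
    G.edges = Finset.univ.biUnion fun i => (C i).edges

/-- `H` is a subgraph of `G` (obtained by deleting some edges and vertices). -/
def IsSubgraph (H G : Digraph n) : Prop := H.verts ⊆ G.verts ∧ H.edges ⊆ G.edges

/-- The circuit rank `c(G) = e(G) - v(G) + 1`. -/
def circuitRank (G : Digraph n) : ℤ := (G.edges.card : ℤ) - (G.verts.card : ℤ) + 1

/-- The edge `ij` is collapsible. -/
def Collapsible (G : Digraph n) (i j : Fin n) : Prop :=
  (i, j) ∈ G.edges ∧ G.outdeg i = 1 ∧ (j, i) ∉ G.edges ∧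
  ∀ k, ¬((k, i) ∈ G.edges ∧ (k, j) ∈ G.edges)

/-- `G` is rigid: no collapsible edges. -/
def Rigid (G : Digraph n) : Prop := ∀ i j, ¬G.Collapsible i j

/-- `k` covers the ordinary vertex `i` (whose unique outgoing edge is `ij`). -/
def Covers (G : Digraph n) (k i : Fin n) : Prop :=
  G.outdeg i = 1 ∧ ∃ j, (i, j) ∈ G.edges ∧
    (((k, i) ∈ G.edges ∧ (k, j) ∈ G.edges) ∨ (k = j ∧ (j, i) ∈ G.edges))

/-- A star on all of `Fin n`: a center joined to every other vertex by a pair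
of oppositely directed edges, and no other edges. -/
def IsStar (G : Digraph n) : Prop :=
  ∃ c : Fin n, G.verts = Finset.univ ∧
    G.edges = Finset.univ.filter fun e => (e.1 = c ∧ e.2 ≠ c) ∨ (e.2 = c ∧ e.1 ≠ c)

/-- The complete directed graph on all of `Fin n`. -/
def IsComplete (G : Digraph n) : Prop :=
  G.verts = Finset.univ ∧ G.edges = Finset.univ.filter fun e => e.1 ≠ e.2

/-- A chorded triangle: a 3-cycle `u → v → w → u` together with the
bidirected pair between `u` and `w`. -/
def IsChordedTriangle (T : Digraph n) : Prop :=
  ∃ u v w : Fin n, u ≠ v ∧ v ≠ w ∧ u ≠ w ∧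
    T.verts = {u, v, w} ∧ T.edges = {(u, w), (w, u), (u, v), (v, w)}

end Digraph

end Money

open Money Money.Digraph


section Aux

open Finset

variable {n : ℕ}

theorem Money.Digraph.ext' {G H : Money.Digraph n} (hv : G.verts = H.verts)
    (he : G.edges = H.edges) : G = H := by
  cases G; cases H; simp_all

theorem reaches_mono {G H : Money.Digraph n} (h : G.edges ⊆ H.edges) {a b : Fin n}
    (hr : G.Reaches a b) : H.Reaches a b :=
  Relation.ReflTransGen.mono (fun _ _ hxy => h hxy) _ _ hr

theorem reaches_chain (G : Money.Digraph n) (g : ℕ → Fin n) (p : ℕ)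
    (hg : ∀ i < p, (g i, g (i + 1)) ∈ G.edges) {a b : ℕ} (hab : a ≤ b) (hb : b ≤ p) :
    G.Reaches (g a) (g b) := by
  induction b, hab using Nat.le_induction with
  | base => exact Relation.ReflTransGen.refl
  | succ b hab ih => exact (ih (by omega)).tail (hg b (by omega))

theorem card_edges_eq_sum_outdeg (G : Money.Digraph n) :
    G.edges.card = ∑ v ∈ G.verts, G.outdeg v :=
  Finset.card_eq_sum_card_fiberwise (fun e he => (G.mem_verts e he).1)

theorem exists_edge_of_outdeg (G : Money.Digraph n) {v : Fin n} (h : G.outdeg v = 1) :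
    ∃ w, (v, w) ∈ G.edges := by
  unfold Money.Digraph.outdeg at h
  obtain ⟨e, he⟩ := Finset.card_eq_one.mp h
  have h1 : e ∈ G.edges.filter (fun e => e.1 = v) := he ▸ Finset.mem_singleton_self e
  rw [Finset.mem_filter] at h1
  exact ⟨e.2, by rw [show (v, e.2) = e by rw [← h1.2]]; exact h1.1⟩

theorem outdeg_eq_zero_of_not_mem (G : Money.Digraph n) {v : Fin n} (h : v ∉ G.verts) :
    G.outdeg v = 0 := by
  unfold Money.Digraph.outdeg
  rw [Finset.card_eq_zero, Finset.filter_eq_empty_iff]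
  intro e he hev
  exact h (hev ▸ (G.mem_verts e he).1)

theorem indeg_eq_zero_of_not_mem (G : Money.Digraph n) {v : Fin n} (h : v ∉ G.verts) :
    G.indeg v = 0 := by
  unfold Money.Digraph.indeg
  rw [Finset.card_eq_zero, Finset.filter_eq_empty_iff]
  intro e he hev
  exact h (hev ▸ (G.mem_verts e he).2)

theorem filter_card_union {α : Type*} [DecidableEq α] {s t : Finset α} (h : Disjoint s t)
    (P : α → Prop) [DecidablePred P] :
    ((s ∪ t).filter P).card = (s.filter P).card + (t.filter P).card := by
  rw [Finset.filter_union]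
  exact Finset.card_union_of_disjoint
    (h.mono (Finset.filter_subset _ _) (Finset.filter_subset _ _))

theorem cycle_card_edges {C : Money.Digraph n} (h : C.IsCycleGraph) :
    C.edges.card = C.verts.card := by
  rw [card_edges_eq_sum_outdeg]
  rw [Finset.card_eq_sum_ones]
  exact Finset.sum_congr rfl fun v hv => (h.2 v hv).1

/-- Edge sets of distinct cycles of a rose are disjoint. -/
theorem rose_cycles_edge_disjoint {k : ℕ} {C : Fin k → Money.Digraph n} {j : Fin n}
    (hcyc : ∀ i, (C i).IsCycleGraph)
    (hpair : ∀ i i', i ≠ i' → (C i).verts ∩ (C i').verts = {j})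
    {a b : Fin k} (hab : a ≠ b) {e : Fin n × Fin n}
    (ha : e ∈ (C a).edges) (hb : e ∈ (C b).edges) : False := by
  have h1 := ((C a).mem_verts e ha).1
  have h2 := ((C a).mem_verts e ha).2
  have h3 := ((C b).mem_verts e hb).1
  have h4 := ((C b).mem_verts e hb).2
  have hj1 : e.1 ∈ (C a).verts ∩ (C b).verts := Finset.mem_inter.mpr ⟨h1, h3⟩
  have hj2 : e.2 ∈ (C a).verts ∩ (C b).verts := Finset.mem_inter.mpr ⟨h2, h4⟩
  rw [hpair a b hab] at hj1 hj2
  exact (C a).no_loops e ha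
    ((Finset.mem_singleton.mp hj1).trans (Finset.mem_singleton.mp hj2).symm)

theorem rose_vertex_deg {G : Money.Digraph n} {k : ℕ} (h : G.IsRose k) :
    ∃ j : Fin n, ∀ v ∈ G.verts, v ≠ j → G.outdeg v = 1 ∧ G.indeg v = 1 := by
  obtain ⟨j, C, hcyc, hj, hpair, hGv, hGe⟩ := h
  refine ⟨j, fun v hv hvj => ?_⟩
  rw [hGv] at hv
  rcases Finset.mem_insert.mp hv with h' | h'
  · exact absurd h' hvj
  obtain ⟨i0, _, hi0⟩ := Finset.mem_biUnion.mp h'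
  have hdisj : ∀ i ∈ (Finset.univ : Finset (Fin k)), ∀ i' ∈ Finset.univ, i ≠ i' →
      Disjoint (C i).edges (C i').edges := by
    intro i _ i' _ hii'
    rw [Finset.disjoint_left]
    intro e he he'
    exact rose_cycles_edge_disjoint hcyc hpair hii' he he'
  have hnot : ∀ i : Fin k, i ≠ i0 → v ∉ (C i).verts := by
    intro i hi hvi
    have : v ∈ (C i).verts ∩ (C i0).verts := Finset.mem_inter.mpr ⟨hvi, hi0⟩
    rw [hpair i i0 hi] at this
    exact hvj (Finset.mem_singleton.mp this)
  constructor
  · unfold Money.Digraph.outdeg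
    rw [hGe, Finset.filter_biUnion, Finset.card_biUnion]
    · rw [Finset.sum_eq_single i0]
      · exact (((hcyc i0).2 v hi0).1 : (C i0).outdeg v = 1)
      · intro i _ hi
        have : (C i).outdeg v = 0 := outdeg_eq_zero_of_not_mem _ (hnot i hi)
        exact this
      · intro h'; exact absurd (Finset.mem_univ i0) h'
    · intro i hi i' hi' hii'
      exact (hdisj i hi i' hi' hii').mono (Finset.filter_subset _ _) (Finset.filter_subset _ _)
  · unfold Money.Digraph.indeg
    rw [hGe, Finset.filter_biUnion, Finset.card_biUnion]
    · rw [Finset.sum_eq_single i0]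
      · exact (((hcyc i0).2 v hi0).2 : (C i0).indeg v = 1)
      · intro i _ hi
        have : (C i).indeg v = 0 := indeg_eq_zero_of_not_mem _ (hnot i hi)
        exact this
      · intro h'; exact absurd (Finset.mem_univ i0) h'
    · intro i hi i' hi' hii'
      exact (hdisj i hi i' hi' hii').mono (Finset.filter_subset _ _) (Finset.filter_subset _ _)

theorem not_rose_of_two {G : Money.Digraph n} {u v : Fin n} (huv : u ≠ v)
    (hu : u ∈ G.verts) (hv : v ∈ G.verts)
    (hdu : 2 ≤ G.outdeg u ∨ 2 ≤ G.indeg u) (hdv : 2 ≤ G.outdeg v ∨ 2 ≤ G.indeg v) :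
    ∀ k : ℕ, ¬G.IsRose k := by
  intro k hk
  obtain ⟨j, hdeg⟩ := rose_vertex_deg hk
  by_cases huj : u = j
  · have := hdeg v hv (by rw [← huj]; exact huv.symm)
    omega
  · have := hdeg u hu huj
    omega

theorem circuitRank_of_rose {G : Money.Digraph n} {k : ℕ} (h : G.IsRose k) :
    G.circuitRank = k := by
  obtain ⟨j, C, hcyc, hj, hpair, hGv, hGe⟩ := h
  have hdisjv : ∀ i i' : Fin k, i ≠ i' →
      Disjoint ((C i).verts.erase j) ((C i').verts.erase j) := by
    intro i i' hii'
    rw [Finset.disjoint_left]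
    intro x hx hx'
    have h1 := Finset.mem_erase.mp hx
    have h2 := Finset.mem_erase.mp hx'
    have : x ∈ (C i).verts ∩ (C i').verts := Finset.mem_inter.mpr ⟨h1.2, h2.2⟩
    rw [hpair i i' hii'] at this
    exact h1.1 (Finset.mem_singleton.mp this)
  have hvcard : G.verts.card = (∑ i : Fin k, ((C i).verts.card - 1)) + 1 := by
    have hjv : j ∈ G.verts := by rw [hGv]; exact Finset.mem_insert_self _ _
    have herase : G.verts.erase j = Finset.univ.biUnion fun i => (C i).verts.erase j := by
      rw [hGv]
      ext x
      simp only [Finset.mem_erase, Finset.mem_insert, Finset.mem_biUnion, Finset.mem_univ,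
        true_and]
      tauto
    have h1 : G.verts.card = (G.verts.erase j).card + 1 :=
      (Finset.card_erase_add_one hjv).symm
    rw [h1, herase, Finset.card_biUnion (fun i _ i' _ h => hdisjv i i' h)]
    congr 1
    refine Finset.sum_congr rfl fun i _ => ?_
    rw [Finset.card_erase_of_mem (hj i)]
  have hecard : G.edges.card = ∑ i : Fin k, (C i).verts.card := by
    rw [hGe, Finset.card_biUnion]
    · exact Finset.sum_congr rfl fun i _ => cycle_card_edges (hcyc i)
    · intro i _ i' _ hii'
      rw [Function.onFun, Finset.disjoint_left]
      intro e he he'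
      exact rose_cycles_edge_disjoint hcyc hpair hii' he he'
  have hpos : ∀ i : Fin k, 1 ≤ (C i).verts.card := fun i =>
    Finset.card_pos.mpr ⟨j, hj i⟩
  have hsum : (∑ i : Fin k, ((C i).verts.card - 1)) + k = ∑ i : Fin k, (C i).verts.card := by
    have : (∑ i : Fin k, ((C i).verts.card - 1)) + (∑ _i : Fin k, 1) =
        ∑ i : Fin k, (C i).verts.card := by
      rw [← Finset.sum_add_distrib]
      exact Finset.sum_congr rfl fun i _ => by have := hpos i; omega
    simpa using this
  unfold Money.Digraph.circuitRank
  rw [hvcard, hecard]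
  push_cast [← hsum]
  ring

theorem reaches_to_walk {G : Money.Digraph n} {a b : Fin n} (h : G.Reaches a b) :
    ∃ (p : ℕ) (f : ℕ → Fin n), f 0 = a ∧ f p = b ∧ ∀ i < p, (f i, f (i + 1)) ∈ G.edges := by
  induction h with
  | refl => exact ⟨0, fun _ => a, rfl, rfl, fun i hi => absurd hi (by omega)⟩
  | @tail b c _ hbc ih =>
    obtain ⟨p, f, hf0, hfp, hfe⟩ := ih
    refine ⟨p + 1, fun m => if m ≤ p then f m else c, by simp [hf0], by simp, ?_⟩
    intro i hi
    rcases Nat.lt_or_ge i p with h' | h'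
    · simpa [Nat.le_of_lt h', Nat.succ_le_of_lt h'] using hfe i h'
    · have : i = p := by omega
      subst this
      simpa [hfp] using hbc

theorem exists_crossing {G : Money.Digraph n} {A : Finset (Fin n)} {h x : Fin n}
    (hr : G.Reaches h x) (hh : h ∈ A) (hx : x ∉ A) :
    ∃ a ∈ A, ∃ w, w ∉ A ∧ (a, w) ∈ G.edges := by
  induction hr with
  | refl => exact absurd hh hx
  | @tail b c hab hbc ih =>
    by_cases hb : b ∈ A
    · exact ⟨b, hb, c, hx, hbc⟩
    · exact ih hb

theorem exists_min_walk (G : Money.Digraph n) (A : Finset (Fin n)) {w h : Fin n}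
    (hw : w ∉ A) (hh : h ∈ A) (hr : G.Reaches w h) :
    ∃ (q : ℕ) (f : ℕ → Fin n), 1 ≤ q ∧ f 0 = w ∧ f q ∈ A ∧
      (∀ i < q, f i ∉ A) ∧ (∀ i ≤ q, ∀ j ≤ q, f i = f j → i = j) ∧
      ∀ i < q, (f i, f (i + 1)) ∈ G.edges := by
  classical
  set W : Set ℕ :=
    {q | ∃ f : ℕ → Fin n, f 0 = w ∧ f q ∈ A ∧ ∀ i < q, (f i, f (i + 1)) ∈ G.edges} with hWdef
  have hWne : W.Nonempty := by
    obtain ⟨p, f, hf0, hfp, hfe⟩ := reaches_to_walk hr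
    exact ⟨p, f, hf0, by rw [hfp]; exact hh, hfe⟩
  obtain ⟨f, hf0, hfq, hfe⟩ := Nat.sInf_mem hWne
  have hq1 : 1 ≤ sInf W := by
    by_contra h
    have h0 : sInf W = 0 := by omega
    rw [h0] at hfq
    rw [hf0] at hfq
    exact hw hfq
  have hpre : ∀ i < sInf W, f i ∉ A := by
    intro i hi hiA
    have hmem : i ∈ W := ⟨f, hf0, hiA, fun i' hi' => hfe i' (by omega)⟩
    have := Nat.sInf_le hmem
    omega
  have key : ∀ i j, i < j → j ≤ sInf W → f i = f j → False := by
    intro i j hlt hj hij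
    have hmem : sInf W - (j - i) ∈ W := by
      refine ⟨fun m => if m ≤ i then f m else f (m + (j - i)), ?_, ?_, ?_⟩
      · show (if (0 : ℕ) ≤ i then f 0 else f (0 + (j - i))) = w
        rw [if_pos (Nat.zero_le i)]
        exact hf0
      · show (if sInf W - (j - i) ≤ i then f (sInf W - (j - i))
            else f (sInf W - (j - i) + (j - i))) ∈ A
        by_cases hqj : sInf W = j
        · have h1 : sInf W - (j - i) = i := by omega
          rw [h1, if_pos le_rfl, hij, ← hqj]
          exact hfq
        · have h1 : ¬sInf W - (j - i) ≤ i := by omega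
          rw [if_neg h1, show sInf W - (j - i) + (j - i) = sInf W by omega]
          exact hfq
      · intro m hm
        show ((if m ≤ i then f m else f (m + (j - i))),
            (if m + 1 ≤ i then f (m + 1) else f (m + 1 + (j - i)))) ∈ G.edges
        rcases Nat.lt_or_ge m i with h' | h'
        · rw [if_pos (by omega : m ≤ i), if_pos (by omega : m + 1 ≤ i)]
          exact hfe m (by omega)
        · rcases Nat.eq_or_lt_of_le h' with h'' | h''
          · rw [if_pos (by omega : m ≤ i), if_neg (by omega : ¬m + 1 ≤ i),
              show m + 1 + (j - i) = j + 1 by omega, ← h'', hij]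
            exact hfe j (by omega)
          · rw [if_neg (by omega : ¬m ≤ i), if_neg (by omega : ¬m + 1 ≤ i),
              show m + 1 + (j - i) = m + (j - i) + 1 by omega]
            exact hfe (m + (j - i)) (by omega)
    have := Nat.sInf_le hmem
    omega
  refine ⟨sInf W, f, hq1, hf0, hfq, hpre, ?_, hfe⟩
  intro i hi j hj hij
  rcases lt_trichotomy i j with h | h | h
  · exact (key i j h hj hij).elim
  · exact h
  · exact (key j i h hi hij.symm).elim

theorem exists_max_subgraph (K : Money.Digraph n) (P : Money.Digraph n → Prop)
    (hne : ∃ H, P H) (hsub : ∀ H, P H → H.edges.card ≤ K.edges.card) :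
    ∃ H, P H ∧ ∀ H', P H' → H'.edges.card ≤ H.edges.card := by
  set S : Set ℕ := {m | ∃ H, P H ∧ H.edges.card = m} with hS
  have hSne : S.Nonempty := by
    obtain ⟨H, hH⟩ := hne
    exact ⟨H.edges.card, H, hH, rfl⟩
  have hbdd : BddAbove S := by
    refine ⟨K.edges.card, ?_⟩
    rintro m ⟨H, hH, rfl⟩
    exact hsub H hH
  obtain ⟨H, hH, hm⟩ := Nat.sSup_mem hSne hbdd
  exact ⟨H, hH, fun H' hH' => hm ▸ le_csSup hbdd ⟨H', hH', rfl⟩⟩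

/-- Ear removal: a connected digraph with circuit rank at least two is a connected proper
subgraph together with a single ear. -/
theorem ear_removal {K : Money.Digraph n} (hK : K.Connected) (hc : 2 ≤ K.circuitRank) :
    ∃ (H : Money.Digraph n) (p : ℕ) (g : ℕ → Fin n),
      H.IsSubgraph K ∧ H.Connected ∧ 1 ≤ p ∧
      g 0 ∈ H.verts ∧ g p ∈ H.verts ∧
      (∀ i, 0 < i → i < p → g i ∉ H.verts) ∧
      (∀ i j, 0 < i → i < p → 0 < j → j < p → g i = g j → i = j) ∧
      (∀ i < p, (g i, g (i + 1)) ∈ K.edges ∧ (g i, g (i + 1)) ∉ H.edges) ∧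
      K.verts = H.verts ∪ (Finset.Ioo 0 p).image g ∧
      K.edges = H.edges ∪ (Finset.range p).image (fun i => (g i, g (i + 1))) := by
  classical
  obtain ⟨v, hv⟩ := hK.1
  have hvpos : 1 ≤ K.verts.card := Finset.card_pos.mpr ⟨v, hv⟩
  have hKe : K.edges.Nonempty := by
    rw [Finset.nonempty_iff_ne_empty]
    intro h
    unfold Money.Digraph.circuitRank at hc
    rw [h] at hc
    simp at hc
    omega
  set P : Money.Digraph n → Prop := fun H => H.IsSubgraph K ∧ H.Connected ∧ H ≠ K with hPdef
  have hPne : ∃ H, P H := by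
    refine ⟨⟨{v}, ∅, by simp, by simp⟩,
      ⟨Finset.singleton_subset_iff.mpr hv, Finset.empty_subset _⟩,
      ⟨⟨v, Finset.mem_singleton_self v⟩, ?_⟩, ?_⟩
    · intro i hi j hj
      rw [Finset.mem_singleton] at hi hj
      rw [hi, hj]
      exact Relation.ReflTransGen.refl
    · intro h
      obtain ⟨e, he⟩ := hKe
      rw [← h] at he
      exact Finset.notMem_empty e he
  obtain ⟨H, ⟨hsub, hconn, hne⟩, hmax⟩ := exists_max_subgraph K P hPne
      (fun H hH => Finset.card_le_card hH.1.2)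
  by_cases hcase : ∃ e ∈ K.edges, e ∉ H.edges ∧ e.1 ∈ H.verts ∧ e.2 ∈ H.verts
  · obtain ⟨e, heK, heH, he1, he2⟩ := hcase
    have hmv : ∀ e' ∈ insert e H.edges, e'.1 ∈ H.verts ∧ e'.2 ∈ H.verts := by
      intro e' he'
      rcases Finset.mem_insert.mp he' with h | h
      · rw [h]; exact ⟨he1, he2⟩
      · exact H.mem_verts e' h
    have hnl : ∀ e' ∈ insert e H.edges, e'.1 ≠ e'.2 := by
      intro e' he'
      rcases Finset.mem_insert.mp he' with h | h
      · rw [h]; exact K.no_loops e heK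
      · exact H.no_loops e' h
    set H1 : Money.Digraph n := ⟨H.verts, insert e H.edges, hmv, hnl⟩ with hH1
    have hH1sub : H1.IsSubgraph K := by
      refine ⟨hsub.1, ?_⟩
      intro e' he'
      rcases Finset.mem_insert.mp he' with h | h
      · rw [h]; exact heK
      · exact hsub.2 h
    have hH1conn : H1.Connected := ⟨hconn.1, fun i hi j hj =>
      reaches_mono (Finset.subset_insert e H.edges) (hconn.2 i hi j hj)⟩
    by_cases hH1K : H1 = K
    · refine ⟨H, 1, fun i => if i = 0 then e.1 else e.2, hsub, hconn, le_rfl,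
        by simpa using he1, by simpa using he2, ?_, ?_, ?_, ?_, ?_⟩
      · intro i hi1 hi2; omega
      · intro i j hi1 hi2; omega
      · intro i hi
        have hi0 : i = 0 := by omega
        subst hi0
        constructor
        · show (e.1, e.2) ∈ K.edges
          exact heK
        · show (e.1, e.2) ∉ H.edges
          exact heH
      · have hIoo : Finset.Ioo 0 1 = (∅ : Finset ℕ) := by
          rw [Finset.eq_empty_iff_forall_notMem]
          intro x hx
          rw [Finset.mem_Ioo] at hx
          omega
        rw [← hH1K, hH1, hIoo, Finset.image_empty, Finset.union_empty]
      · rw [← hH1K, hH1]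
        show insert e H.edges = H.edges ∪ (Finset.range 1).image _
        rw [Finset.range_one, Finset.image_singleton]
        show insert e H.edges = H.edges ∪ {(e.1, e.2)}
        rw [Finset.union_comm, ← Finset.insert_eq]
    · exfalso
      have h2 := hmax H1 ⟨hH1sub, hH1conn, hH1K⟩
      have h3 : H.edges.card < H1.edges.card := by
        show _ < (insert e H.edges).card
        rw [Finset.card_insert_of_notMem heH]
        omega
      omega
  · push_neg at hcase
    have hvK : ∃ x ∈ K.verts, x ∉ H.verts := by
      by_contra h
      push_neg at h
      have hveq : K.verts = H.verts := Finset.Subset.antisymm h hsub.1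
      have heeq : K.edges = H.edges := by
        apply Finset.Subset.antisymm _ hsub.2
        intro e heK
        by_contra heH
        have h1 := (K.mem_verts e heK).1
        have h2 := (K.mem_verts e heK).2
        rw [hveq] at h1 h2
        exact hcase e heK heH h1 h2
      exact hne (Money.Digraph.ext' hveq.symm heeq.symm)
    obtain ⟨x, hxK, hxH⟩ := hvK
    obtain ⟨v1, hv1⟩ := hconn.1
    have hreach : K.Reaches v1 x := hK.2 v1 (hsub.1 hv1) x hxK
    obtain ⟨a, haH, w, hwH, hawK⟩ := exists_crossing hreach hv1 hxH
    have hwK : w ∈ K.verts := (K.mem_verts _ hawK).2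
    have hreach2 : K.Reaches w v1 := hK.2 w hwK v1 (hsub.1 hv1)
    obtain ⟨q, f, hq1, hf0, hfq, hpre, hinjf, hfe⟩ := exists_min_walk K H.verts hwH hv1 hreach2
    set p := q + 1 with hpdef
    clear_value p
    set g : ℕ → Fin n := fun i => if i = 0 then a else f (i - 1) with hgdef
    have hg0 : g 0 = a := by
      show (if (0 : ℕ) = 0 then a else f (0 - 1)) = a
      rw [if_pos rfl]
    have hgi : ∀ i, 1 ≤ i → g i = f (i - 1) := by
      intro i hi
      show (if i = 0 then a else f (i - 1)) = f (i - 1)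
      rw [if_neg (by omega)]
    have hgp : g p ∈ H.verts := by
      rw [hgi p (by omega), show p - 1 = q by omega]
      exact hfq
    have hintg : ∀ i, 0 < i → i < p → g i ∉ H.verts := by
      intro i hi1 hi2
      rw [hgi i hi1]
      exact hpre (i - 1) (by omega)
    have hinjg : ∀ i j, 0 < i → i < p → 0 < j → j < p → g i = g j → i = j := by
      intro i j hi1 hi2 hj1 hj2 hij
      rw [hgi i hi1, hgi j hj1] at hij
      have := hinjf (i - 1) (by omega) (j - 1) (by omega) hij
      omega
    have hedgeg : ∀ i < p, (g i, g (i + 1)) ∈ K.edges ∧ (g i, g (i + 1)) ∉ H.edges := by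
      intro i hi
      have hK' : (g i, g (i + 1)) ∈ K.edges := by
        by_cases h0 : i = 0
        · subst h0
          show (g 0, g 1) ∈ K.edges
          rw [hg0, hgi 1 le_rfl, show (1 : ℕ) - 1 = 0 from rfl, hf0]
          exact hawK
        · rw [hgi i (by omega), hgi (i + 1) (by omega),
            show i + 1 - 1 = (i - 1) + 1 by omega]
          exact hfe (i - 1) (by omega)
      refine ⟨hK', ?_⟩
      intro hmem
      by_cases hip : i + 1 < p
      · exact hintg (i + 1) (by omega) hip ((H.mem_verts _ hmem).2)
      · exact hintg i (by omega) (by omega) ((H.mem_verts _ hmem).1)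
    set I := (Finset.Ioo 0 p).image g with hI
    set F := (Finset.range p).image (fun i => (g i, g (i + 1))) with hF
    have hmv2 : ∀ e ∈ H.edges ∪ F, e.1 ∈ H.verts ∪ I ∧ e.2 ∈ H.verts ∪ I := by
      intro e he
      rcases Finset.mem_union.mp he with h | h
      · exact ⟨Finset.mem_union_left _ (H.mem_verts e h).1,
          Finset.mem_union_left _ (H.mem_verts e h).2⟩
      · obtain ⟨i, hi, rfl⟩ := Finset.mem_image.mp h
        rw [Finset.mem_range] at hi
        constructor
        · by_cases h0 : i = 0
          · subst h0
            exact Finset.mem_union_left _ (show g 0 ∈ H.verts by rw [hg0]; exact haH)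
          · exact Finset.mem_union_right _
              (Finset.mem_image_of_mem g (Finset.mem_Ioo.mpr ⟨by omega, hi⟩))
        · by_cases hip : i + 1 = p
          · exact Finset.mem_union_left _ (show g (i + 1) ∈ H.verts by rw [hip]; exact hgp)
          · have ha1 : 0 < i + 1 := by omega
            have ha2 : i + 1 < p := by omega
            exact Finset.mem_union_right _
              (Finset.mem_image_of_mem g (Finset.mem_Ioo.mpr ⟨ha1, ha2⟩))
    have hnl2 : ∀ e ∈ H.edges ∪ F, e.1 ≠ e.2 := by
      intro e he
      rcases Finset.mem_union.mp he with h | h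
      · exact H.no_loops e h
      · obtain ⟨i, hi, rfl⟩ := Finset.mem_image.mp h
        exact K.no_loops _ (hedgeg i (Finset.mem_range.mp hi)).1
    set H2 : Money.Digraph n := ⟨H.verts ∪ I, H.edges ∪ F, hmv2, hnl2⟩ with hH2
    have hedgesH2 : ∀ i < p, (g i, g (i + 1)) ∈ H2.edges := fun i hi =>
      Finset.mem_union_right _ (Finset.mem_image_of_mem _ (Finset.mem_range.mpr hi))
    have hH2conn : H2.Connected := by
      refine ⟨⟨v1, Finset.mem_union_left _ hv1⟩, ?_⟩
      have hHreach : ∀ u ∈ H.verts, ∀ v' ∈ H.verts, H2.Reaches u v' := fun u hu v' hv' =>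
        reaches_mono Finset.subset_union_left (hconn.2 u hu v' hv')
      intro u hu v' hv'
      have hto : ∀ u' ∈ H2.verts, H2.Reaches u' (g p) := by
        intro u' hu'
        rcases Finset.mem_union.mp hu' with h | h
        · exact hHreach u' h (g p) hgp
        · obtain ⟨i, hi, rfl⟩ := Finset.mem_image.mp h
          rw [Finset.mem_Ioo] at hi
          exact reaches_chain H2 g p hedgesH2 (le_of_lt hi.2) le_rfl
      have hfrom : ∀ v'' ∈ H2.verts, H2.Reaches (g p) v'' := by
        intro v'' hv''
        rcases Finset.mem_union.mp hv'' with h | h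
        · exact hHreach (g p) hgp v'' h
        · obtain ⟨i, hi, rfl⟩ := Finset.mem_image.mp h
          rw [Finset.mem_Ioo] at hi
          exact (hHreach (g p) hgp (g 0) (by rw [hg0]; exact haH)).trans
            (reaches_chain H2 g p hedgesH2 (Nat.zero_le i) (le_of_lt hi.2))
      exact (hto u hu).trans (hfrom v' hv')
    have hH2sub : H2.IsSubgraph K := by
      constructor
      · intro x' hx'
        rcases Finset.mem_union.mp hx' with h | h
        · exact hsub.1 h
        · obtain ⟨i, hi, rfl⟩ := Finset.mem_image.mp h
          rw [Finset.mem_Ioo] at hi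
          exact (K.mem_verts _ (hedgeg i hi.2).1).1
      · intro e he
        rcases Finset.mem_union.mp he with h | h
        · exact hsub.2 h
        · obtain ⟨i, hi, rfl⟩ := Finset.mem_image.mp h
          exact (hedgeg i (Finset.mem_range.mp hi)).1
    by_cases hH2K : H2 = K
    · refine ⟨H, p, g, hsub, hconn, by omega, by rw [hg0]; exact haH, hgp, hintg, hinjg,
        hedgeg, ?_, ?_⟩
      · rw [← hH2K, hH2]
      · rw [← hH2K, hH2]
    · exfalso
      have h2 := hmax H2 ⟨hH2sub, hH2conn, hH2K⟩
      have hmem01 : (g 0, g 1) ∈ H2.edges :=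
        Finset.mem_union_right _ (Finset.mem_image_of_mem _ (Finset.mem_range.mpr (by omega)))
      have hnot01 : (g 0, g 1) ∉ H.edges := (hedgeg 0 (by omega)).2
      have h3 : H.edges.card < H2.edges.card :=
        Finset.card_lt_card ((Finset.ssubset_iff_of_subset Finset.subset_union_left).mpr
          ⟨_, hmem01, hnot01⟩)
      omega

theorem ear_cards {K H : Money.Digraph n} {p : ℕ} {g : ℕ → Fin n} (hp : 1 ≤ p)
    (hg0 : g 0 ∈ H.verts)
    (hint : ∀ i, 0 < i → i < p → g i ∉ H.verts)
    (hinj : ∀ i j, 0 < i → i < p → 0 < j → j < p → g i = g j → i = j)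
    (hedges : ∀ i < p, (g i, g (i + 1)) ∈ K.edges ∧ (g i, g (i + 1)) ∉ H.edges)
    (hV : K.verts = H.verts ∪ (Finset.Ioo 0 p).image g)
    (hE : K.edges = H.edges ∪ (Finset.range p).image (fun i => (g i, g (i + 1)))) :
    K.verts.card = H.verts.card + (p - 1) ∧ K.edges.card = H.edges.card + p := by
  have hIdisj : Disjoint H.verts ((Finset.Ioo 0 p).image g) := by
    rw [Finset.disjoint_right]
    intro x hx
    obtain ⟨i, hi, rfl⟩ := Finset.mem_image.mp hx
    rw [Finset.mem_Ioo] at hi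
    exact hint i hi.1 hi.2
  have hIcard : ((Finset.Ioo 0 p).image g).card = p - 1 := by
    have hinjOn : Set.InjOn g (Finset.Ioo 0 p) := by
      intro i hi j hj hij
      rw [Finset.mem_coe, Finset.mem_Ioo] at hi hj
      exact hinj i j hi.1 hi.2 hj.1 hj.2 hij
    rw [Finset.card_image_of_injOn hinjOn, Nat.card_Ioo]
    omega
  have hFdisj : Disjoint H.edges ((Finset.range p).image fun i => (g i, g (i + 1))) := by
    rw [Finset.disjoint_right]
    intro e he
    obtain ⟨i, hi, rfl⟩ := Finset.mem_image.mp he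
    exact (hedges i (Finset.mem_range.mp hi)).2
  have hFcard : ((Finset.range p).image fun i => (g i, g (i + 1))).card = p := by
    have hinjOn : Set.InjOn (fun i => (g i, g (i + 1))) (Finset.range p) := by
      intro i hi j hj hij
      rw [Finset.mem_coe, Finset.mem_range] at hi hj
      rw [Prod.mk.injEq] at hij
      obtain ⟨h1, -⟩ := hij
      by_cases hi0 : i = 0
      · by_cases hj0 : j = 0
        · omega
        · exfalso; apply hint j (by omega) hj; rw [← h1, hi0]; exact hg0
      · by_cases hj0 : j = 0
        · exfalso; apply hint i (by omega) hi; rw [h1, hj0]; exact hg0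
        · exact hinj i j (by omega) hi (by omega) hj h1
    rw [Finset.card_image_of_injOn hinjOn, Finset.card_range]
  constructor
  · rw [hV, Finset.card_union_of_disjoint hIdisj, hIcard]
  · rw [hE, Finset.card_union_of_disjoint hFdisj, hFcard]

theorem closed_ear_rose {K H : Money.Digraph n} {p : ℕ} {g : ℕ → Fin n} {k : ℕ}
    {j : Fin n} {C : Fin k → Money.Digraph n}
    (hcyc : ∀ i, (C i).IsCycleGraph) (hj : ∀ i, j ∈ (C i).verts)
    (hpair : ∀ i i', i ≠ i' → (C i).verts ∩ (C i').verts = {j})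
    (hHv : H.verts = insert j (Finset.univ.biUnion fun i => (C i).verts))
    (hHe : H.edges = Finset.univ.biUnion fun i => (C i).edges)
    (hp : 1 ≤ p)
    (hint : ∀ i, 0 < i → i < p → g i ∉ H.verts)
    (hinj : ∀ i i', 0 < i → i < p → 0 < i' → i' < p → g i = g i' → i = i')
    (hedges : ∀ i < p, (g i, g (i + 1)) ∈ K.edges ∧ (g i, g (i + 1)) ∉ H.edges)
    (hV : K.verts = H.verts ∪ (Finset.Ioo 0 p).image g)
    (hE : K.edges = H.edges ∪ (Finset.range p).image (fun i => (g i, g (i + 1))))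
    (hs : g 0 = j) (ht : g p = j) :
    K.IsRose (k + 1) := by
  classical
  have hjH : j ∈ H.verts := by rw [hHv]; exact Finset.mem_insert_self _ _
  have hCv : ∀ i : Fin k, (C i).verts ⊆ H.verts := by
    intro i x hx
    rw [hHv]
    exact Finset.mem_insert_of_mem (Finset.mem_biUnion.mpr ⟨i, Finset.mem_univ i, hx⟩)
  set F := (Finset.range p).image (fun i => (g i, g (i + 1))) with hFdef
  set Pverts := (Finset.range (p + 1)).image g with hPvdef
  have hFK : F ⊆ K.edges := by
    intro e he
    obtain ⟨i, hi, rfl⟩ := Finset.mem_image.mp he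
    exact (hedges i (Finset.mem_range.mp hi)).1
  have hfstinj : ∀ i i', i < p → i' < p → g i = g i' → i = i' := by
    intro i i' hi hi' hii'
    by_cases h0 : i = 0
    · by_cases h0' : i' = 0
      · omega
      · exfalso; apply hint i' (by omega) hi'; rw [← hii', h0, hs]; exact hjH
    · by_cases h0' : i' = 0
      · exfalso; apply hint i (by omega) hi; rw [hii', h0', hs]; exact hjH
      · exact hinj i i' (by omega) hi (by omega) hi' hii'
  have hsndinj : ∀ i i', 1 ≤ i → i ≤ p → 1 ≤ i' → i' ≤ p → g i = g i' → i = i' := by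
    intro i i' h1 h2 h1' h2' hii'
    by_cases hip : i = p
    · by_cases hip' : i' = p
      · omega
      · exfalso; apply hint i' (by omega) (by omega); rw [← hii', hip, ht]; exact hjH
    · by_cases hip' : i' = p
      · exfalso; apply hint i (by omega) (by omega); rw [hii', hip', ht]; exact hjH
      · exact hinj i i' (by omega) (by omega) (by omega) (by omega) hii'
  have hmvP : ∀ e ∈ F, e.1 ∈ Pverts ∧ e.2 ∈ Pverts := by
    intro e he
    obtain ⟨i, hi, rfl⟩ := Finset.mem_image.mp he
    rw [Finset.mem_range] at hi
    exact ⟨Finset.mem_image_of_mem g (Finset.mem_range.mpr (by omega)),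
      Finset.mem_image_of_mem g (Finset.mem_range.mpr (by omega))⟩
  have hnlP : ∀ e ∈ F, e.1 ≠ e.2 := fun e he => K.no_loops e (hFK he)
  set P : Money.Digraph n := ⟨Pverts, F, hmvP, hnlP⟩ with hPdef
  have hPedges : ∀ i < p, (g i, g (i + 1)) ∈ P.edges := fun i hi =>
    Finset.mem_image_of_mem _ (Finset.mem_range.mpr hi)
  have hPcyc : P.IsCycleGraph := by
    constructor
    · refine ⟨⟨g 0, Finset.mem_image_of_mem g (Finset.mem_range.mpr (by omega))⟩, ?_⟩
      intro u hu v hv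
      obtain ⟨i, hi, rfl⟩ := Finset.mem_image.mp hu
      obtain ⟨i', hi', rfl⟩ := Finset.mem_image.mp hv
      rw [Finset.mem_range] at hi hi'
      by_cases hii' : i ≤ i'
      · exact reaches_chain P g p hPedges hii' (by omega)
      · have h1 : P.Reaches (g i) (g p) := reaches_chain P g p hPedges (by omega) le_rfl
        have h2 : P.Reaches (g 0) (g i') := reaches_chain P g p hPedges (Nat.zero_le _) (by omega)
        have h3 : g p = g 0 := by rw [ht, hs]
        rw [h3] at h1
        exact h1.trans h2
    · intro v hv
      obtain ⟨i, hi, rfl⟩ := Finset.mem_image.mp hv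
      rw [Finset.mem_range] at hi
      constructor
      · obtain ⟨i₀, hi₀, hgi⟩ : ∃ i₀, i₀ < p ∧ g i = g i₀ := by
          by_cases hip : i = p
          · exact ⟨0, by omega, by rw [hip, ht, hs]⟩
          · exact ⟨i, by omega, rfl⟩
        rw [hgi]
        show (F.filter (fun e => e.1 = g i₀)).card = 1
        have heq : F.filter (fun e => e.1 = g i₀) = {(g i₀, g (i₀ + 1))} := by
          ext e
          simp only [Finset.mem_filter, Finset.mem_singleton, hFdef, Finset.mem_image,
            Finset.mem_range]
          constructor
          · rintro ⟨⟨m, hm, rfl⟩, h1⟩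
            have h1' : g m = g i₀ := h1
            rw [hfstinj m i₀ hm hi₀ h1']
          · rintro rfl
            exact ⟨⟨i₀, hi₀, rfl⟩, rfl⟩
        rw [heq, Finset.card_singleton]
      · obtain ⟨i₀, hi₀1, hi₀2, hgi⟩ : ∃ i₀, 1 ≤ i₀ ∧ i₀ ≤ p ∧ g i = g i₀ := by
          by_cases hip : i = 0
          · exact ⟨p, by omega, le_rfl, by rw [hip, hs, ← ht]⟩
          · exact ⟨i, by omega, by omega, rfl⟩
        rw [hgi]
        show (F.filter (fun e => e.2 = g i₀)).card = 1
        have heq : F.filter (fun e => e.2 = g i₀) = {(g (i₀ - 1), g (i₀ - 1 + 1))} := by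
          ext e
          simp only [Finset.mem_filter, Finset.mem_singleton, hFdef, Finset.mem_image,
            Finset.mem_range]
          constructor
          · rintro ⟨⟨m, hm, rfl⟩, h1⟩
            have h1' : g (m + 1) = g i₀ := h1
            have := hsndinj (m + 1) i₀ (by omega) (by omega) hi₀1 hi₀2 h1'
            rw [show m = i₀ - 1 by omega]
          · rintro rfl
            refine ⟨⟨i₀ - 1, by omega, rfl⟩, ?_⟩
            show g (i₀ - 1 + 1) = g i₀
            rw [show i₀ - 1 + 1 = i₀ by omega]
        rw [heq, Finset.card_singleton]
  have hcapP : ∀ i : Fin k, (C i).verts ∩ Pverts = {j} := by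
    intro i
    ext x
    simp only [Finset.mem_inter, Finset.mem_singleton, hPvdef, Finset.mem_image,
      Finset.mem_range]
    constructor
    · rintro ⟨hx, ⟨m, hm, rfl⟩⟩
      by_cases h0 : m = 0
      · rw [h0]; exact hs
      by_cases hmp : m = p
      · rw [hmp]; exact ht
      · exfalso; exact hint m (by omega) (by omega) (hCv i hx)
    · rintro rfl
      exact ⟨hj i, ⟨0, by omega, hs⟩⟩
  set C' : Fin (k + 1) → Money.Digraph n :=
    fun i => if h : (i : ℕ) < k then C ⟨i, h⟩ else P with hC'def
  have hC'lt : ∀ (i : Fin (k + 1)) (h : (i : ℕ) < k), C' i = C ⟨i, h⟩ := fun i h => dif_pos h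
  have hC'last : ∀ i : Fin (k + 1), ¬(i : ℕ) < k → C' i = P := fun i h => dif_neg h
  have hbiU : ∀ x, (x ∈ Finset.univ.biUnion fun i : Fin (k + 1) => (C' i).verts) ↔
      (∃ i : Fin k, x ∈ (C i).verts) ∨ x ∈ Pverts := by
    intro x
    simp only [Finset.mem_biUnion, Finset.mem_univ, true_and]
    constructor
    · rintro ⟨i, hi⟩
      by_cases h : (i : ℕ) < k
      · rw [hC'lt i h] at hi; exact Or.inl ⟨⟨i, h⟩, hi⟩
      · rw [hC'last i h] at hi; exact Or.inr hi
    · rintro (⟨i, hi⟩ | hPm)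
      · refine ⟨⟨(i : ℕ), by omega⟩, ?_⟩
        rw [hC'lt _ (show ((⟨(i : ℕ), by omega⟩ : Fin (k + 1)) : ℕ) < k from i.isLt)]
        exact hi
      · refine ⟨⟨k, by omega⟩, ?_⟩
        rw [hC'last _ (show ¬k < k by omega)]
        exact hPm
  have hbiUe : ∀ e, (e ∈ Finset.univ.biUnion fun i : Fin (k + 1) => (C' i).edges) ↔
      (∃ i : Fin k, e ∈ (C i).edges) ∨ e ∈ F := by
    intro e
    simp only [Finset.mem_biUnion, Finset.mem_univ, true_and]
    constructor
    · rintro ⟨i, hi⟩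
      by_cases h : (i : ℕ) < k
      · rw [hC'lt i h] at hi; exact Or.inl ⟨⟨i, h⟩, hi⟩
      · rw [hC'last i h] at hi; exact Or.inr hi
    · rintro (⟨i, hi⟩ | hFm)
      · refine ⟨⟨(i : ℕ), by omega⟩, ?_⟩
        rw [hC'lt _ (show ((⟨(i : ℕ), by omega⟩ : Fin (k + 1)) : ℕ) < k from i.isLt)]
        exact hi
      · refine ⟨⟨k, by omega⟩, ?_⟩
        rw [hC'last _ (show ¬k < k by omega)]
        exact hFm
  refine ⟨j, C', ?_, ?_, ?_, ?_, ?_⟩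
  · intro i
    by_cases h : (i : ℕ) < k
    · rw [hC'lt i h]; exact hcyc _
    · rw [hC'last i h]; exact hPcyc
  · intro i
    by_cases h : (i : ℕ) < k
    · rw [hC'lt i h]; exact hj _
    · rw [hC'last i h]
      show j ∈ Pverts
      rw [← hs]
      exact Finset.mem_image_of_mem g (Finset.mem_range.mpr (by omega))
  · intro i i' hii'
    by_cases h : (i : ℕ) < k <;> by_cases h' : (i' : ℕ) < k
    · rw [hC'lt i h, hC'lt i' h']
      apply hpair
      intro hcc
      have hval := congrArg Fin.val hcc
      exact hii' (Fin.ext hval)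
    · rw [hC'lt i h, hC'last i' h']
      exact hcapP ⟨i, h⟩
    · rw [hC'last i h, hC'lt i' h']
      rw [Finset.inter_comm]
      exact hcapP ⟨i', h'⟩
    · exfalso
      apply hii'
      have hi1 := i.isLt
      have hi2 := i'.isLt
      exact Fin.ext (by omega)
  · rw [hV, hHv]
    ext x
    rw [Finset.mem_insert, hbiU x]
    constructor
    · intro hx
      rcases Finset.mem_union.mp hx with hx | hx
      · rcases Finset.mem_insert.mp hx with hx | hx
        · exact Or.inl hx
        · obtain ⟨i, _, hi⟩ := Finset.mem_biUnion.mp hx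
          exact Or.inr (Or.inl ⟨i, hi⟩)
      · obtain ⟨m, hm, rfl⟩ := Finset.mem_image.mp hx
        rw [Finset.mem_Ioo] at hm
        exact Or.inr (Or.inr (Finset.mem_image_of_mem g (Finset.mem_range.mpr (by omega))))
    · rintro (rfl | ⟨i, hi⟩ | hPm)
      · exact Finset.mem_union_left _ (Finset.mem_insert_self _ _)
      · exact Finset.mem_union_left _
          (Finset.mem_insert_of_mem (Finset.mem_biUnion.mpr ⟨i, Finset.mem_univ i, hi⟩))
      · obtain ⟨m, hm, rfl⟩ := Finset.mem_image.mp hPm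
        rw [Finset.mem_range] at hm
        by_cases h0 : m = 0
        · subst h0
          exact Finset.mem_union_left _ (by rw [hs]; exact Finset.mem_insert_self _ _)
        by_cases hmp : m = p
        · subst hmp
          exact Finset.mem_union_left _ (by rw [ht]; exact Finset.mem_insert_self _ _)
        · exact Finset.mem_union_right _
            (Finset.mem_image_of_mem g (Finset.mem_Ioo.mpr ⟨by omega, by omega⟩))
  · rw [hE, hHe]
    ext e
    rw [hbiUe e]
    constructor
    · intro he
      rcases Finset.mem_union.mp he with h | h
      · obtain ⟨i, _, hi⟩ := Finset.mem_biUnion.mp h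
        exact Or.inl ⟨i, hi⟩
      · exact Or.inr h
    · rintro (⟨i, hi⟩ | hFm)
      · exact Finset.mem_union_left _ (Finset.mem_biUnion.mpr ⟨i, Finset.mem_univ i, hi⟩)
      · exact Finset.mem_union_right _ hFm

theorem repair {K H : Money.Digraph n} {p : ℕ} {g : ℕ → Fin n} {k : ℕ}
    (hsub : H.IsSubgraph K) (hp : 1 ≤ p)
    (hg0 : g 0 ∈ H.verts) (hgp : g p ∈ H.verts)
    (hint : ∀ i, 0 < i → i < p → g i ∉ H.verts)
    (hinj : ∀ i j, 0 < i → i < p → 0 < j → j < p → g i = g j → i = j)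
    (hedges : ∀ i < p, (g i, g (i + 1)) ∈ K.edges ∧ (g i, g (i + 1)) ∉ H.edges)
    (hV : K.verts = H.verts ∪ (Finset.Ioo 0 p).image g)
    (hE : K.edges = H.edges ∪ (Finset.range p).image (fun i => (g i, g (i + 1))))
    (hrose : ∀ k' : ℕ, 2 ≤ k' → ¬K.IsRose k')
    (hk3 : 3 ≤ k) (hH : H.IsRose k) :
    ∃ K' : Money.Digraph n, K'.IsSubgraph K ∧ K' ≠ K ∧ K'.Connected ∧
      (∀ k' : ℕ, 2 ≤ k' → ¬K'.IsRose k') ∧ K'.circuitRank = 3 := by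
  classical
  obtain ⟨j, C, hcyc, hj, hpair, hHv, hHe⟩ := hH
  have hCv : ∀ i : Fin k, (C i).verts ⊆ H.verts := by
    intro i x hx
    rw [hHv]
    exact Finset.mem_insert_of_mem (Finset.mem_biUnion.mpr ⟨i, Finset.mem_univ i, hx⟩)
  have hCe : ∀ i : Fin k, (C i).edges ⊆ H.edges := by
    intro i e he
    rw [hHe]
    exact Finset.mem_biUnion.mpr ⟨i, Finset.mem_univ i, he⟩
  set F := (Finset.range p).image (fun i => (g i, g (i + 1))) with hFdef
  have hFK : F ⊆ K.edges := by
    intro e he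
    obtain ⟨i, hi, rfl⟩ := Finset.mem_image.mp he
    exact (hedges i (Finset.mem_range.mp hi)).1
  have hFH : ∀ e ∈ F, e ∉ H.edges := by
    intro e he
    obtain ⟨i, hi, rfl⟩ := Finset.mem_image.mp he
    exact (hedges i (Finset.mem_range.mp hi)).2
  by_cases hstj : g 0 = j ∧ g p = j
  · exact absurd (closed_ear_rose hcyc hj hpair hHv hHe hp hint hinj hedges hV hE
      hstj.1 hstj.2) (hrose (k + 1) (by omega))
  have hex : ∀ x ∈ H.verts, ∃ i : Fin k, x ∈ (C i).verts := by
    intro x hx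
    rw [hHv] at hx
    rcases Finset.mem_insert.mp hx with h | h
    · exact ⟨⟨0, by omega⟩, h ▸ hj _⟩
    · obtain ⟨i, _, hi⟩ := Finset.mem_biUnion.mp h
      exact ⟨i, hi⟩
  have hunivk : 1 < (Finset.univ : Finset (Fin k)).card := by
    rw [Finset.card_univ, Fintype.card_fin]; omega
  have hpick : ∃ a b : Fin k, a ≠ b ∧ g 0 ∈ (C a).verts ∧
      g p ∈ (C a).verts ∪ (C b).verts := by
    by_cases hs : g 0 = j
    · obtain ⟨a, ha⟩ := hex (g p) hgp
      obtain ⟨b, _, hb⟩ := Finset.exists_mem_ne hunivk a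
      exact ⟨a, b, Ne.symm hb, hs ▸ hj a, Finset.mem_union_left _ ha⟩
    · obtain ⟨a, ha⟩ := hex (g 0) hg0
      obtain ⟨c', hc'⟩ := hex (g p) hgp
      by_cases hca : c' = a
      · obtain ⟨b, _, hb⟩ := Finset.exists_mem_ne hunivk a
        exact ⟨a, b, Ne.symm hb, ha, Finset.mem_union_left _ (hca ▸ hc')⟩
      · exact ⟨a, c', Ne.symm hca, ha, Finset.mem_union_right _ hc'⟩
  obtain ⟨a, b, hab, hsa, hta⟩ := hpick
  set Pverts := (Finset.range (p + 1)).image g with hPvdef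
  have hmvK' : ∀ e ∈ (C a).edges ∪ ((C b).edges ∪ F),
      e.1 ∈ (C a).verts ∪ ((C b).verts ∪ Pverts) ∧
      e.2 ∈ (C a).verts ∪ ((C b).verts ∪ Pverts) := by
    intro e he
    rcases Finset.mem_union.mp he with h | h
    · exact ⟨Finset.mem_union_left _ ((C a).mem_verts e h).1,
        Finset.mem_union_left _ ((C a).mem_verts e h).2⟩
    rcases Finset.mem_union.mp h with h | h
    · exact ⟨Finset.mem_union_right _ (Finset.mem_union_left _ ((C b).mem_verts e h).1),
        Finset.mem_union_right _ (Finset.mem_union_left _ ((C b).mem_verts e h).2)⟩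
    · obtain ⟨i, hi, rfl⟩ := Finset.mem_image.mp h
      rw [Finset.mem_range] at hi
      constructor
      · exact Finset.mem_union_right _ (Finset.mem_union_right _
          (Finset.mem_image_of_mem g (Finset.mem_range.mpr (by omega))))
      · exact Finset.mem_union_right _ (Finset.mem_union_right _
          (Finset.mem_image_of_mem g (Finset.mem_range.mpr (by omega))))
  have hnlK' : ∀ e ∈ (C a).edges ∪ ((C b).edges ∪ F), e.1 ≠ e.2 := by
    intro e he
    rcases Finset.mem_union.mp he with h | h
    · exact (C a).no_loops e h
    rcases Finset.mem_union.mp h with h | h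
    · exact (C b).no_loops e h
    · exact K.no_loops e (hFK h)
  set K' : Money.Digraph n := ⟨(C a).verts ∪ ((C b).verts ∪ Pverts),
    (C a).edges ∪ ((C b).edges ∪ F), hmvK', hnlK'⟩ with hK'def
  have hK'sub : K'.IsSubgraph K := by
    constructor
    · intro x hx
      rcases Finset.mem_union.mp hx with h | h
      · exact hsub.1 (hCv a h)
      rcases Finset.mem_union.mp h with h | h
      · exact hsub.1 (hCv b h)
      · obtain ⟨i, hi, rfl⟩ := Finset.mem_image.mp h
        rw [Finset.mem_range] at hi
        by_cases h0 : i = 0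
        · subst h0; exact hsub.1 hg0
        by_cases hip : i = p
        · subst hip; exact hsub.1 hgp
        · rw [hV]
          exact Finset.mem_union_right _
            (Finset.mem_image_of_mem g (Finset.mem_Ioo.mpr ⟨by omega, by omega⟩))
    · intro e he
      rcases Finset.mem_union.mp he with h | h
      · exact hsub.2 (hCe a h)
      rcases Finset.mem_union.mp h with h | h
      · exact hsub.2 (hCe b h)
      · exact hFK h
  have hdab : Disjoint (C a).edges (C b).edges := by
    rw [Finset.disjoint_left]
    intro e he he'
    exact rose_cycles_edge_disjoint hcyc hpair hab he he'
  have hdaF : Disjoint (C a).edges F := by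
    rw [Finset.disjoint_left]
    intro e he he'
    exact hFH e he' (hCe a he)
  have hdbF : Disjoint (C b).edges F := by
    rw [Finset.disjoint_left]
    intro e he he'
    exact hFH e he' (hCe b he)
  have hdunion : Disjoint (C a).edges ((C b).edges ∪ F) :=
    Finset.disjoint_union_right.mpr ⟨hdab, hdaF⟩
  have houtd : ∀ v : Fin n, K'.outdeg v =
      (C a).outdeg v + ((C b).outdeg v + (F.filter (fun e => e.1 = v)).card) := by
    intro v
    show (((C a).edges ∪ ((C b).edges ∪ F)).filter (fun e => e.1 = v)).card = _
    rw [filter_card_union hdunion, filter_card_union hdbF]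
    rfl
  have hind : ∀ v : Fin n, K'.indeg v =
      (C a).indeg v + ((C b).indeg v + (F.filter (fun e => e.2 = v)).card) := by
    intro v
    show (((C a).edges ∪ ((C b).edges ∪ F)).filter (fun e => e.2 = v)).card = _
    rw [filter_card_union hdunion, filter_card_union hdbF]
    rfl
  have hFout : (F.filter (fun e => e.1 = g 0)).card = 1 := by
    have heq : F.filter (fun e => e.1 = g 0) = {(g 0, g 1)} := by
      ext e
      simp only [Finset.mem_filter, Finset.mem_singleton, hFdef, Finset.mem_image,
        Finset.mem_range]
      constructor
      · rintro ⟨⟨i, hi, rfl⟩, h1⟩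
        by_cases h0 : i = 0
        · subst h0; rfl
        · exfalso
          apply hint i (by omega) hi
          have h1' : g i = g 0 := h1
          rw [h1']
          exact hg0
      · rintro rfl
        exact ⟨⟨0, by omega, rfl⟩, rfl⟩
    rw [heq, Finset.card_singleton]
  have hFin : (F.filter (fun e => e.2 = g p)).card = 1 := by
    have heq : F.filter (fun e => e.2 = g p) = {(g (p - 1), g (p - 1 + 1))} := by
      ext e
      simp only [Finset.mem_filter, Finset.mem_singleton, hFdef, Finset.mem_image,
        Finset.mem_range]
      constructor
      · rintro ⟨⟨i, hi, rfl⟩, h1⟩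
        have h1' : g (i + 1) = g p := h1
        by_cases hip : i + 1 = p
        · rw [show i = p - 1 by omega]
        · exfalso
          apply hint (i + 1) (by omega) (by omega)
          rw [h1']
          exact hgp
      · rintro rfl
        refine ⟨⟨p - 1, by omega, rfl⟩, ?_⟩
        show g (p - 1 + 1) = g p
        rw [show p - 1 + 1 = p by omega]
    rw [heq, Finset.card_singleton]
  have hjout : 2 ≤ K'.outdeg j := by
    rw [houtd]
    have h1 := ((hcyc a).2 j (hj a)).1
    have h2 := ((hcyc b).2 j (hj b)).1
    omega
  have hjK' : j ∈ K'.verts := Finset.mem_union_left _ (hj a)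
  have hg0K' : g 0 ∈ K'.verts := Finset.mem_union_left _ hsa
  have hgpK' : g p ∈ K'.verts := by
    rcases Finset.mem_union.mp hta with h | h
    · exact Finset.mem_union_left _ h
    · exact Finset.mem_union_right _ (Finset.mem_union_left _ h)
  have hnonrose : ∀ k' : ℕ, 2 ≤ k' → ¬K'.IsRose k' := by
    by_cases hs : g 0 = j
    · have htj : g p ≠ j := fun h => hstj ⟨hs, h⟩
      have htin : 2 ≤ K'.indeg (g p) := by
        rw [hind]
        rcases Finset.mem_union.mp hta with h | h
        · have := ((hcyc a).2 (g p) h).2; omega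
        · have := ((hcyc b).2 (g p) h).2; omega
      intro k' _
      exact not_rose_of_two htj hgpK' hjK' (Or.inr htin) (Or.inl hjout) k'
    · have hsout : 2 ≤ K'.outdeg (g 0) := by
        rw [houtd]
        have := ((hcyc a).2 (g 0) hsa).1
        omega
      intro k' _
      exact not_rose_of_two hs hg0K' hjK' (Or.inl hsout) (Or.inl hjout) k'
  obtain ⟨c, hca, hcb⟩ : ∃ c : Fin k, c ≠ a ∧ c ≠ b := by
    by_contra hcon
    push_neg at hcon
    have hsubab : (Finset.univ : Finset (Fin k)) ⊆ {a, b} := by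
      intro c _
      rcases Classical.em (c = a) with h | h
      · exact Finset.mem_insert.mpr (Or.inl h)
      · exact Finset.mem_insert.mpr (Or.inr (Finset.mem_singleton.mpr (hcon c h)))
    have h1 := Finset.card_le_card hsubab
    have h2 : ({a, b} : Finset (Fin k)).card ≤ 2 :=
      (Finset.card_insert_le a {b}).trans (by simp)
    rw [Finset.card_univ, Fintype.card_fin] at h1
    omega
  have hK'ne : K' ≠ K := by
    obtain ⟨vc, hvc⟩ := (hcyc c).1.1
    obtain ⟨wv, hwv⟩ := exists_edge_of_outdeg _ ((hcyc c).2 vc hvc).1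
    intro hKK
    have hmem : (vc, wv) ∈ K.edges := hsub.2 (hCe c hwv)
    rw [← hKK] at hmem
    rcases Finset.mem_union.mp hmem with h | h
    · exact rose_cycles_edge_disjoint hcyc hpair hca hwv h
    rcases Finset.mem_union.mp h with h | h
    · exact rose_cycles_edge_disjoint hcyc hpair hcb hwv h
    · exact hFH _ h (hCe c hwv)
  have hK'edges : ∀ i < p, (g i, g (i + 1)) ∈ K'.edges := fun i hi =>
    Finset.mem_union_right _ (Finset.mem_union_right _
      (Finset.mem_image_of_mem _ (Finset.mem_range.mpr hi)))
  have hreachCa : ∀ u ∈ (C a).verts, ∀ v ∈ (C a).verts, K'.Reaches u v := fun u hu v hv =>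
    reaches_mono Finset.subset_union_left ((hcyc a).1.2 u hu v hv)
  have hreachCb : ∀ u ∈ (C b).verts, ∀ v ∈ (C b).verts, K'.Reaches u v := fun u hu v hv =>
    reaches_mono (fun e he => Finset.mem_union_right _ (Finset.mem_union_left _ he))
      ((hcyc b).1.2 u hu v hv)
  have hK'conn : K'.Connected := by
    refine ⟨⟨j, hjK'⟩, ?_⟩
    have hto : ∀ u ∈ K'.verts, K'.Reaches u j := by
      intro u hu
      rcases Finset.mem_union.mp hu with h | h
      · exact hreachCa u h j (hj a)
      rcases Finset.mem_union.mp h with h | h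
      · exact hreachCb u h j (hj b)
      · obtain ⟨i, hi, rfl⟩ := Finset.mem_image.mp h
        rw [Finset.mem_range] at hi
        have h1 : K'.Reaches (g i) (g p) := reaches_chain K' g p hK'edges (by omega) le_rfl
        have h2 : K'.Reaches (g p) j := by
          rcases Finset.mem_union.mp hta with h' | h'
          · exact hreachCa _ h' j (hj a)
          · exact hreachCb _ h' j (hj b)
        exact h1.trans h2
    have hfrom : ∀ u ∈ K'.verts, K'.Reaches j u := by
      intro u hu
      rcases Finset.mem_union.mp hu with h | h
      · exact hreachCa j (hj a) u h
      rcases Finset.mem_union.mp h with h | h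
      · exact hreachCb j (hj b) u h
      · obtain ⟨i, hi, rfl⟩ := Finset.mem_image.mp h
        rw [Finset.mem_range] at hi
        have h1 : K'.Reaches j (g 0) := hreachCa j (hj a) (g 0) hsa
        have h2 : K'.Reaches (g 0) (g i) := reaches_chain K' g p hK'edges (Nat.zero_le i) (by omega)
        exact h1.trans h2
    intro u hu v hv
    exact (hto u hu).trans (hfrom v hv)
  have hVeq : K'.verts = ((C a).verts ∪ (C b).verts) ∪ (Finset.Ioo 0 p).image g := by
    show (C a).verts ∪ ((C b).verts ∪ Pverts) = _
    ext x
    simp only [Finset.mem_union, hPvdef, Finset.mem_image, Finset.mem_range, Finset.mem_Ioo]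
    constructor
    · rintro (h | h | ⟨i, hi, rfl⟩)
      · exact Or.inl (Or.inl h)
      · exact Or.inl (Or.inr h)
      · by_cases h0 : i = 0
        · subst h0; exact Or.inl (Or.inl hsa)
        by_cases hip : i = p
        · subst hip
          rcases Finset.mem_union.mp hta with h' | h'
          · exact Or.inl (Or.inl h')
          · exact Or.inl (Or.inr h')
        · exact Or.inr ⟨i, ⟨by omega, by omega⟩, rfl⟩
    · rintro ((h | h) | ⟨i, hi, rfl⟩)
      · exact Or.inl h
      · exact Or.inr (Or.inl h)
      · exact Or.inr (Or.inr ⟨i, by omega, rfl⟩)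
  have hdisjI : Disjoint ((C a).verts ∪ (C b).verts) ((Finset.Ioo 0 p).image g) := by
    rw [Finset.disjoint_right]
    intro x hx
    obtain ⟨i, hi, rfl⟩ := Finset.mem_image.mp hx
    rw [Finset.mem_Ioo] at hi
    intro hmem
    apply hint i hi.1 hi.2
    rcases Finset.mem_union.mp hmem with h | h
    · exact hCv a h
    · exact hCv b h
  have hIcard : ((Finset.Ioo 0 p).image g).card = p - 1 := by
    have hinjOn : Set.InjOn g (Finset.Ioo 0 p) := by
      intro i hi j' hj' hij
      rw [Finset.mem_coe, Finset.mem_Ioo] at hi hj'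
      exact hinj i j' hi.1 hi.2 hj'.1 hj'.2 hij
    rw [Finset.card_image_of_injOn hinjOn, Nat.card_Ioo]
    omega
  have hFcard : F.card = p := by
    have hinjOn : Set.InjOn (fun i => (g i, g (i + 1))) (Finset.range p) := by
      intro i hi j' hj' hij
      rw [Finset.mem_coe, Finset.mem_range] at hi hj'
      rw [Prod.mk.injEq] at hij
      obtain ⟨h1, -⟩ := hij
      by_cases hi0 : i = 0
      · by_cases hj0 : j' = 0
        · omega
        · exfalso; apply hint j' (by omega) hj'; rw [← h1, hi0]; exact hg0
      · by_cases hj0 : j' = 0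
        · exfalso; apply hint i (by omega) hi; rw [h1, hj0]; exact hg0
        · exact hinj i j' (by omega) hi (by omega) hj' h1
    rw [hFdef, Finset.card_image_of_injOn hinjOn, Finset.card_range]
  have hVcard : K'.verts.card + 1 + 1 = (C a).verts.card + (C b).verts.card + p := by
    rw [hVeq, Finset.card_union_of_disjoint hdisjI, hIcard]
    have h1 := Finset.card_union_add_card_inter (C a).verts (C b).verts
    rw [hpair a b hab, Finset.card_singleton] at h1
    omega
  have hEcard : K'.edges.card = (C a).verts.card + (C b).verts.card + p := by
    show ((C a).edges ∪ ((C b).edges ∪ F)).card = _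
    rw [Finset.card_union_of_disjoint hdunion, Finset.card_union_of_disjoint hdbF,
      cycle_card_edges (hcyc a), cycle_card_edges (hcyc b)]
    omega
  have hcr3 : K'.circuitRank = 3 := by
    unfold Money.Digraph.circuitRank
    omega
  exact ⟨K', hK'sub, hK'ne, hK'conn, hnonrose, hcr3⟩

theorem main_aux : ∀ (m : ℕ) (K : Money.Digraph n), K.edges.card ≤ m → K.Connected →
    (∀ k : ℕ, 2 ≤ k → ¬K.IsRose k) → 3 < K.circuitRank →
    ∃ K' : Money.Digraph n, K'.IsSubgraph K ∧ K' ≠ K ∧ K'.Connected ∧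
      (∀ k : ℕ, 2 ≤ k → ¬K'.IsRose k) ∧ K'.circuitRank = 3 := by
  intro m
  induction m with
  | zero =>
    intro K hcard hconn hrose hcr
    exfalso
    have h2 : 1 ≤ K.verts.card := Finset.card_pos.mpr hconn.1
    unfold Money.Digraph.circuitRank at hcr
    omega
  | succ m ih =>
    intro K hcard hconn hrose hcr
    obtain ⟨H, p, g, hsub, hHconn, hp, hg0, hgp, hint, hinj, hedges, hV, hE⟩ :=
      ear_removal hconn (by omega)
    obtain ⟨hc1, hc2⟩ := ear_cards hp hg0 hint hinj hedges hV hE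
    have hcrH : K.circuitRank = H.circuitRank + 1 := by
      unfold Money.Digraph.circuitRank at *
      omega
    have hHlt : H.edges.card < K.edges.card := by omega
    have hne : H ≠ K := by
      intro h; rw [h] at hHlt; omega
    by_cases hHrose : ∀ k : ℕ, 2 ≤ k → ¬H.IsRose k
    · by_cases h3 : H.circuitRank = 3
      · exact ⟨H, hsub, hne, hHconn, hHrose, h3⟩
      · obtain ⟨K', h1, h2, h3', h4, h5⟩ := ih H (by omega) hHconn hHrose (by omega)
        refine ⟨K', ⟨h1.1.trans hsub.1, h1.2.trans hsub.2⟩, ?_, h3', h4, h5⟩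
        intro h
        have hle : K'.edges.card ≤ H.edges.card := Finset.card_le_card h1.2
        rw [h] at hle
        omega
    · push_neg at hHrose
      obtain ⟨k, hk2, hkrose⟩ := hHrose
      have hk : (k : ℤ) = H.circuitRank := (circuitRank_of_rose hkrose).symm
      exact repair hsub hp hg0 hgp hint hinj hedges hV hE hrose (by omega) hkrose

end Aux

/-- if connected `G` is not a rose and `c(G) > 3`, then `G` has a
proper connected subgraph `K` that is not a rose with `c(K) = 3`. -/
theorem stmt15 {n : ℕ} (G : Money.Digraph n) (hG : G.Connected)
    (hrose : ∀ k : ℕ, 2 ≤ k → ¬G.IsRose k) (hcr : 3 < G.circuitRank) :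
    ∃ K : Money.Digraph n, K.IsSubgraph G ∧ K ≠ G ∧ K.Connected ∧
      (∀ k : ℕ, 2 ≤ k → ¬K.IsRose k) ∧ K.circuitRank = 3 :=
  main_aux G.edges.card G le_rfl hG hrose hcr
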